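/- Let A₁ = inf{A(f)} over real even f ∈ L¹(ℝ), f ≠ 0, f = f̂, f(0) = 0, and let B₁⁻ be the analogous infimum of A(f)² with the condition f(0) < 0 replacing f(0) = 0 (and f̂(0) ≤ 0 arising automatically). Then B₁⁻ ≤ 2·A₁². I.e., for every such f with f(0) = 0 and A(f) = a, there exists real even h ∈ L¹ with h(0) < 0, ĥ(0) = 0, and both h ≥ 0 and ĥ ≥ 0 on [a√2, ∞). -/

import Mathlib

open Real MeasureTheory

lemma aux_translate (F : ℝ → ℂ) (b y : ℝ) :
    FourierTransform.fourier (fun x => F (x + b)) y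
      = Complex.exp ((2 * π * b * y : ℝ) * Complex.I) * FourierTransform.fourier F y := by
  rw [Real.fourier_real_eq_integral_exp_smul,
      Real.fourier_real_eq_integral_exp_smul]
  simp only [smul_eq_mul]
  have step1 : (∫ v : ℝ, Complex.exp ((-2 * π * v * y : ℝ) * Complex.I) * F (v + b))
      = ∫ v : ℝ, (fun u => Complex.exp ((2 * π * b * y : ℝ) * Complex.I) *
          (Complex.exp ((-2 * π * u * y : ℝ) * Complex.I) * F u)) (v + b) := by
    congr 1; funext v
    simp only
    rw [← mul_assoc, ← Complex.exp_add]
    congr 2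
    push_cast
    ring
  rw [step1, integral_add_right_eq_self (fun u => Complex.exp ((2 * π * b * y : ℝ) * Complex.I) *
          (Complex.exp ((-2 * π * u * y : ℝ) * Complex.I) * F u)) b, integral_const_mul]

lemma aux_scale (F : ℝ → ℂ) {l : ℝ} (hl : l ≠ 0) (y : ℝ) :
    FourierTransform.fourier (fun x => F (l * x)) y
      = |l⁻¹| • FourierTransform.fourier F (y / l) := by
  have hlc : (l : ℂ) ≠ 0 := Complex.ofReal_ne_zero.mpr hl
  rw [Real.fourier_real_eq_integral_exp_smul,
      Real.fourier_real_eq_integral_exp_smul]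
  simp only [smul_eq_mul]
  have step1 : (∫ v : ℝ, Complex.exp ((-2 * π * v * y : ℝ) * Complex.I) * F (l * v))
      = ∫ v : ℝ, (fun u => Complex.exp ((-2 * π * u * (y / l) : ℝ) * Complex.I) * F u) (l * v) := by
    congr 1; funext v
    simp only
    congr 2
    push_cast
    field_simp
  rw [step1, Measure.integral_comp_mul_left
    (fun u => Complex.exp ((-2 * π * u * (y / l) : ℝ) * Complex.I) * F u) l]

lemma aux_exp_bd (y : ℝ) :
    ∀ v : ℝ, ‖Complex.exp ((-2 * π * v * y : ℝ) * Complex.I)‖ ≤ 1 := by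
  intro v
  rw [Complex.norm_exp_ofReal_mul_I]

lemma aux_exp_ms (y : ℝ) :
    AEStronglyMeasurable (fun v : ℝ => Complex.exp ((-2 * π * v * y : ℝ) * Complex.I)) volume :=
  (Complex.continuous_exp.comp (by continuity)).aestronglyMeasurable

lemma aux_fourier_g (f : ℝ → ℝ) (hint : Integrable f) (b : ℝ)
    (hself : ∀ y, FourierTransform.fourier (fun x => (f x : ℂ)) y = (f y : ℂ)) (y : ℝ) :
    FourierTransform.fourier (fun x => ((f (x - b) + f (x + b) + 2 * f x : ℝ) : ℂ)) y
      = ((2 * Real.cos (2 * π * b * y) + 2 : ℝ) : ℂ) * (f y : ℂ) := by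
  have T : ∀ c : ℝ, (∫ v : ℝ, Complex.exp ((-2 * π * v * y : ℝ) * Complex.I) * (f (v + c) : ℂ))
      = Complex.exp ((2 * π * c * y : ℝ) * Complex.I) * (f y : ℂ) := by
    intro c
    have h1 := aux_translate (fun x => (f x : ℂ)) c y
    rw [hself, Real.fourier_real_eq_integral_exp_smul] at h1
    simpa [smul_eq_mul] using h1
  have Tf : (∫ v : ℝ, Complex.exp ((-2 * π * v * y : ℝ) * Complex.I) * (f v : ℂ)) = (f y : ℂ) := by
    have h1 := hself y
    rw [Real.fourier_real_eq_integral_exp_smul] at h1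
    simpa [smul_eq_mul] using h1
  have I1 : Integrable (fun v : ℝ =>
      Complex.exp ((-2 * π * v * y : ℝ) * Complex.I) * (f (v - b) : ℂ)) :=
    ((hint.comp_sub_right b).ofReal).bdd_mul (aux_exp_ms y) (ae_of_all _ (aux_exp_bd y))
  have I2 : Integrable (fun v : ℝ =>
      Complex.exp ((-2 * π * v * y : ℝ) * Complex.I) * (f (v + b) : ℂ)) :=
    ((hint.comp_add_right b).ofReal).bdd_mul (aux_exp_ms y) (ae_of_all _ (aux_exp_bd y))
  have I3 : Integrable (fun v : ℝ =>
      Complex.exp ((-2 * π * v * y : ℝ) * Complex.I) * (f v : ℂ)) :=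
    (hint.ofReal).bdd_mul (aux_exp_ms y) (ae_of_all _ (aux_exp_bd y))
  rw [Real.fourier_real_eq_integral_exp_smul]
  simp only [smul_eq_mul]
  have expand : (∫ v : ℝ, Complex.exp ((-2 * π * v * y : ℝ) * Complex.I) *
        ((f (v - b) + f (v + b) + 2 * f v : ℝ) : ℂ))
      = (∫ v : ℝ, Complex.exp ((-2 * π * v * y : ℝ) * Complex.I) * (f (v - b) : ℂ))
        + ((∫ v : ℝ, Complex.exp ((-2 * π * v * y : ℝ) * Complex.I) * (f (v + b) : ℂ))
        + (2 : ℂ) * ∫ v : ℝ, Complex.exp ((-2 * π * v * y : ℝ) * Complex.I) * (f v : ℂ)) := by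
    have e1 : (∫ v : ℝ, Complex.exp ((-2 * π * v * y : ℝ) * Complex.I) *
          ((f (v - b) + f (v + b) + 2 * f v : ℝ) : ℂ))
        = ∫ v : ℝ, (Complex.exp ((-2 * π * v * y : ℝ) * Complex.I) * (f (v - b) : ℂ)
          + (Complex.exp ((-2 * π * v * y : ℝ) * Complex.I) * (f (v + b) : ℂ)
            + (2 : ℂ) * (Complex.exp ((-2 * π * v * y : ℝ) * Complex.I) * (f v : ℂ)))) := by
      congr 1; funext v; push_cast; ring
    have I23 : Integrable (fun v : ℝ =>
        Complex.exp ((-2 * π * v * y : ℝ) * Complex.I) * (f (v + b) : ℂ)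
          + (2 : ℂ) * (Complex.exp ((-2 * π * v * y : ℝ) * Complex.I) * (f v : ℂ))) :=
      I2.add (I3.const_mul 2)
    rw [e1, integral_add I1 I23, integral_add I2 (I3.const_mul 2), integral_const_mul]
  rw [expand, Tf]
  have h1 : (∫ v : ℝ, Complex.exp ((-2 * π * v * y : ℝ) * Complex.I) * (f (v - b) : ℂ))
      = Complex.exp ((2 * π * (-b) * y : ℝ) * Complex.I) * (f y : ℂ) := by
    have h2 := T (-b)
    simp only [← sub_eq_add_neg] at h2
    exact h2
  rw [h1, T b]
  have key : Complex.exp ((2 * π * (-b) * y : ℝ) * Complex.I)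
      + Complex.exp ((2 * π * b * y : ℝ) * Complex.I)
      = 2 * ((Real.cos (2 * π * b * y) : ℝ) : ℂ) := by
    rw [Complex.exp_mul_I, Complex.exp_mul_I, Complex.ofReal_cos]
    have e1 : ((2 * π * (-b) * y : ℝ) : ℂ) = -((2 * π * b * y : ℝ) : ℂ) := by push_cast; ring
    rw [e1, Complex.cos_neg, Complex.sin_neg]
    ring
  have rhs : ((2 * Real.cos (2 * π * b * y) + 2 : ℝ) : ℂ)
      = 2 * ((Real.cos (2 * π * b * y) : ℝ) : ℂ) + 2 := by push_cast; ring
  rw [rhs]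
  linear_combination (f y : ℂ) * key

theorem stmt_19 (f : ℝ → ℝ) (hint : Integrable f) (hcont : Continuous f)
    (heven : ∀ x, f (-x) = f x) (hne : f ≠ 0)
    (hself : ∀ y, FourierTransform.fourier (fun x => (f x : ℂ)) y = (f y : ℂ))
    (hf0 : f 0 = 0) (a : ℝ) (ha : 0 < a) (hpos : ∀ x : ℝ, a ≤ |x| → 0 ≤ f x) :
    ∃ h : ℝ → ℝ, Integrable h ∧ Continuous h ∧ (∀ x, h (-x) = h x) ∧
      h 0 < 0 ∧
      FourierTransform.fourier (fun x => (h x : ℂ)) 0 = 0 ∧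
      (∀ x : ℝ, a * Real.sqrt 2 ≤ |x| → 0 ≤ h x) ∧
      (∀ y : ℝ, a * Real.sqrt 2 ≤ |y| →
        0 ≤ (FourierTransform.fourier (fun x => (h x : ℂ)) y).re) := by
  -- the integral of f vanishes
  have hF0 : ∫ x, f x = 0 := by
    have h0 : FourierTransform.fourier (fun x => (f x : ℂ)) 0 = ∫ x, (f x : ℂ) := by
      rw [Real.fourier_real_eq_integral_exp_smul]; simp
    have h1 : (∫ x, (f x : ℂ)) = 0 := by rw [← h0, hself 0, hf0]; simp
    have h2 : ((∫ x, f x : ℝ) : ℂ) = 0 := by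
      rw [show ((∫ x, f x : ℝ) : ℂ) = ∫ x, (f x : ℂ) from integral_ofReal.symm]
      exact h1
    exact_mod_cast h2
  -- there is a point where f is negative
  obtain ⟨x₀, hx0⟩ : ∃ x, f x < 0 := by
    by_contra hno
    push_neg at hno
    apply hne
    have hae : f =ᵐ[volume] 0 := (integral_eq_zero_iff_of_nonneg hno hint).mp hF0
    exact (Continuous.ae_eq_iff_eq volume hcont continuous_const).mp hae
  set b := |x₀| with hbdef
  have hb0 : 0 ≤ b := abs_nonneg x₀
  have hfb : f b < 0 := by
    rcases abs_choice x₀ with hh | hh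
    · rw [hbdef, hh]; exact hx0
    · rw [hbdef, hh, heven]; exact hx0
  have hba : b < a := by
    by_contra hc
    push_neg at hc
    exact absurd (hpos b (by rwa [abs_of_nonneg hb0])) (not_le.mpr hfb)
  -- the scaling factor
  set l := Real.sqrt ((a + b) / a) with hldef
  have habp : 0 < (a + b) / a := div_pos (by linarith) ha
  have hl0 : 0 < l := Real.sqrt_pos.mpr habp
  have hne0 : l ≠ 0 := ne_of_gt hl0
  have hl2 : a * (l * l) = a + b := by
    rw [hldef, Real.mul_self_sqrt habp.le]; field_simp
  have hlle : l ≤ Real.sqrt 2 := by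
    apply Real.sqrt_le_sqrt
    rw [div_le_iff₀ ha]; linarith
  set g : ℝ → ℝ := fun x => f (x - b) + f (x + b) + 2 * f x with hgdef
  have geven : ∀ u, g (-u) = g u := by
    intro u
    simp only [hgdef]
    rw [show -u - b = -(u + b) by ring, heven, show -u + b = -(u - b) by ring, heven, heven]
    ring
  have hgint : Integrable g :=
    ((hint.comp_sub_right b).add (hint.comp_add_right b)).add (hint.const_mul 2)
  have hgcont : Continuous g :=
    ((hcont.comp (continuous_id.sub continuous_const)).add
      (hcont.comp (continuous_id.add continuous_const))).add (continuous_const.mul hcont)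
  -- the Fourier transform of the rescaled function
  have hFh : ∀ y : ℝ, FourierTransform.fourier (fun x => (g (l * x) : ℂ)) y
      = ((|l⁻¹| * ((2 * Real.cos (2 * π * b * (y / l)) + 2) * f (y / l)) : ℝ) : ℂ) := by
    intro y
    have h1 := aux_scale (fun x => (g x : ℂ)) hne0 y
    have h2 : FourierTransform.fourier (fun x => (g x : ℂ)) (y / l)
        = ((2 * Real.cos (2 * π * b * (y / l)) + 2 : ℝ) : ℂ) * (f (y / l) : ℂ) :=
      aux_fourier_g f hint b hself (y / l)
    rw [h2] at h1
    rw [h1]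
    push_cast
    rw [Complex.real_smul]
  refine ⟨fun x => g (l * x), ?_, ?_, ?_, ?_, ?_, ?_, ?_⟩
  · exact hgint.comp_mul_left' hne0
  · exact hgcont.comp (continuous_const.mul continuous_id)
  · intro x
    show g (l * -x) = g (l * x)
    rw [mul_neg, geven]
  · show g (l * 0) < 0
    have hg0 : g (l * 0) = 2 * f b := by
      simp only [hgdef, mul_zero, zero_sub, zero_add, heven, hf0]
      ring
    rw [hg0]
    linarith
  · rw [hFh 0]
    norm_num [hf0]
  · -- nonnegativity of h far out
    intro x hx
    show 0 ≤ g (l * x)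
    have habs : |l * x| = l * |x| := by rw [abs_mul, abs_of_pos hl0]
    have hsq : Real.sqrt 2 * Real.sqrt 2 = 2 := Real.mul_self_sqrt (by norm_num)
    have hx1 : a + b ≤ l * |x| := by
      nlinarith [abs_nonneg x, Real.sqrt_nonneg 2]
    have hbb : |b| = b := abs_of_nonneg hb0
    have k1 : |l * x| - |b| ≤ |l * x - b| := abs_sub_abs_le_abs_sub _ _
    have k2 : |l * x| - |b| ≤ |l * x + b| := by
      have := abs_sub_abs_le_abs_sub (l * x) (-b)
      rwa [abs_neg, sub_neg_eq_add] at this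
    have p1 : 0 ≤ f (l * x - b) := hpos _ (by rw [habs] at k1; linarith)
    have p2 : 0 ≤ f (l * x + b) := hpos _ (by rw [habs] at k2; linarith)
    have p3 : 0 ≤ f (l * x) := hpos _ (by rw [habs]; linarith)
    simp only [hgdef]
    linarith
  · -- nonnegativity of the Fourier transform far out
    intro y hy
    rw [hFh y]
    rw [Complex.ofReal_re]
    have hfyl : 0 ≤ f (y / l) := by
      apply hpos
      rw [abs_div, abs_of_pos hl0, le_div_iff₀ hl0]
      calc a * l ≤ a * Real.sqrt 2 := by nlinarith
        _ ≤ |y| := hy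
    have hcos : 0 ≤ 2 * Real.cos (2 * π * b * (y / l)) + 2 := by
      nlinarith [Real.neg_one_le_cos (2 * π * b * (y / l))]
    exact mul_nonneg (abs_nonneg _) (mul_nonneg hcos hfyl)
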